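/- Let X be a topological space, x₀ ∈ X, and let g and s be loops at x₀ (continuous paths from x₀ to x₀). Then there exists a continuous map H : [0,1] × [0,1] → X satisfying H(t,0) = g(t) and H(t,1) = g(t) for all t ∈ [0,1], and H(0,u) = s(u) and H(1,u) = s(u) for all u ∈ [0,1] (that is, a free self-homotopy of the loop g whose basepoint traces out the loop s), if and only if the concatenated loop s·g is path-homotopic (homotopic rel endpoints) to the concatenated loop g·s, i.e. the classes of s and g commute in the fundamental group π₁(X, x₀). -/
import Mathlib

open unitInterval

noncomputable section SelfHomotopyAux

/-- clamp to [0,1] -/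
def cl (x : ℝ) : ℝ := max 0 (min 1 x)

lemma cl_mem (x : ℝ) : cl x ∈ Set.Icc (0:ℝ) 1 :=
  ⟨le_max_left _ _, max_le (by norm_num) (min_le_left _ _)⟩

/-- clamp to the unit interval -/
def c01 (x : ℝ) : I := ⟨cl x, cl_mem x⟩

lemma continuous_c01 : Continuous c01 :=
  Continuous.subtype_mk (continuous_const.max (continuous_const.min continuous_id)) _

lemma cl_of_nonpos {x : ℝ} (h : x ≤ 0) : cl x = 0 := by
  simp [cl, min_eq_right (le_trans h zero_le_one), max_eq_left h]

lemma cl_of_ge {x : ℝ} (h : 1 ≤ x) : cl x = 1 := by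
  simp [cl, min_eq_left h]

lemma cl_of_mem {x : ℝ} (h0 : 0 ≤ x) (h1 : x ≤ 1) : cl x = x := by
  simp [cl, min_eq_right h1, max_eq_right h0]

lemma c01_of_nonpos {x : ℝ} (h : x ≤ 0) : c01 x = 0 := Subtype.ext (cl_of_nonpos h)

lemma c01_of_ge {x : ℝ} (h : 1 ≤ x) : c01 x = 1 := Subtype.ext (cl_of_ge h)

lemma c01_id (t : I) : c01 (t : ℝ) = t := Subtype.ext (cl_of_mem t.2.1 t.2.2)

@[simp] lemma c01_cl (x : ℝ) : c01 (cl x) = c01 x :=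
  Subtype.ext (cl_of_mem (cl_mem x).1 (cl_mem x).2)

@[simp] lemma c01_coe (x : ℝ) : ((c01 x : I) : ℝ) = cl x := rfl

variable {X : Type*} [TopologicalSpace X] {x₀ : X}

lemma trans_eval_left (a b : Path x₀ x₀) (r : ℝ) (h0 : 0 ≤ r) (h1 : r ≤ 1/2) :
    (a.trans b) (c01 r) = a (c01 (2*r)) := by
  rw [Path.trans_apply,
    dif_pos (show ((c01 r : I) : ℝ) ≤ 1/2 by rw [c01_coe, cl_of_mem h0 (by linarith)]; linarith)]
  congr 1
  apply Subtype.ext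
  show 2*cl r = cl (2*r)
  rw [cl_of_mem h0 (by linarith), cl_of_mem (by linarith) (by linarith)]

lemma trans_eval_right (a b : Path x₀ x₀) (r : ℝ) (h0 : 1/2 ≤ r) (h1 : r ≤ 1) :
    (a.trans b) (c01 r) = b (c01 (2*r - 1)) := by
  rw [Path.trans_apply]
  rcases eq_or_lt_of_le h0 with heq | hlt
  · rw [dif_pos (show ((c01 r : I) : ℝ) ≤ 1/2 by
        rw [c01_coe, cl_of_mem (by linarith) (by linarith)]; linarith)]
    rw [show c01 (2*r - 1) = 0 from c01_of_nonpos (by linarith), b.source]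
    conv_rhs => rw [← a.target]
    congr 1
    apply Subtype.ext
    show 2*cl r = ((1:I) : ℝ)
    rw [Set.Icc.coe_one, cl_of_mem (by linarith) (by linarith)]
    linarith
  · rw [dif_neg (show ¬ ((c01 r : I) : ℝ) ≤ 1/2 by
        rw [c01_coe, cl_of_mem (by linarith) (by linarith)]; push_neg; linarith)]
    congr 1
    apply Subtype.ext
    show 2*cl r - 1 = cl (2*r - 1)
    rw [cl_of_mem (by linarith) h1, cl_of_mem (by linarith) (by linarith)]

private theorem glue_cover {Z Y : Type*} [TopologicalSpace Z] [TopologicalSpace Y]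
    {n : ℕ} (A : Fin n → Set Z) (f : Fin n → Z → Y)
    (hcov : ∀ z, ∃ i, z ∈ A i) (hcl : ∀ i, IsClosed (A i))
    (hf : ∀ i, Continuous (f i))
    (hagree : ∀ i j z, z ∈ A i → z ∈ A j → f i z = f j z) :
    ∃ h : Z → Y, Continuous h ∧ ∀ i z, z ∈ A i → h z = f i z := by
  classical
  choose idx hidx using hcov
  refine ⟨fun z => f (idx z) z, ?_, fun i z hz => hagree _ _ _ (hidx z) hz⟩
  rw [continuous_iff_isClosed]
  intro C hC
  have hEq : (fun z => f (idx z) z) ⁻¹' C = ⋃ i, (A i ∩ (f i) ⁻¹' C) := by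
    ext z
    simp only [Set.mem_preimage, Set.mem_iUnion, Set.mem_inter_iff]
    constructor
    · intro h; exact ⟨idx z, hidx z, h⟩
    · rintro ⟨i, hzi, hfi⟩
      rwa [hagree (idx z) i z (hidx z) hzi]
  rw [hEq]
  exact isClosed_iUnion_of_finite fun i => ((hcl i).inter (hC.preimage (hf i)))

/-- The eight closed regions of the unit square. -/
private def RegA : Fin 8 → Set (I × I) :=
  (fun i => match i with
        | 0 => {p : I × I | (p.2 : ℝ) ≤ 3/4 ∧ (p.1 : ℝ) ≤ (p.2 : ℝ) ∧ (p.1 : ℝ) ≤ 1/4}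
        | 1 => {p : I × I | (p.2 : ℝ) ≤ 1/4 ∧ (p.2 : ℝ) ≤ (p.1 : ℝ) ∧ (p.1 : ℝ) ≤ 1 - 2*(p.2 : ℝ)}
        | 2 => {p : I × I | (p.2 : ℝ) ≤ 1/4 ∧ 1 - 2*(p.2 : ℝ) ≤ (p.1 : ℝ)}
        | 3 => {p : I × I | 1/4 ≤ (p.1 : ℝ) ∧ (p.1 : ℝ) ≤ 3/4 ∧ 1/4 ≤ (p.2 : ℝ) ∧ (p.2 : ℝ) ≤ 3/4}
        | 4 => {p : I × I | 1/4 ≤ (p.2 : ℝ) ∧ (p.2 : ℝ) ≤ 3/4 ∧ 3/4 ≤ (p.1 : ℝ)}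
        | 5 => {p : I × I | 3/4 ≤ (p.2 : ℝ) ∧ (p.1 : ℝ) ≤ 2*(1 - (p.2 : ℝ))}
        | 6 => {p : I × I | 3/4 ≤ (p.2 : ℝ) ∧ 2*(1 - (p.2 : ℝ)) ≤ (p.1 : ℝ) ∧ (p.1 : ℝ) ≤ (p.2 : ℝ)}
        | 7 => {p : I × I | 3/4 ≤ (p.2 : ℝ) ∧ (p.2 : ℝ) ≤ (p.1 : ℝ)})

private lemma RegA_closed (i : Fin 8) : IsClosed (RegA i) := by
  have c1 : Continuous fun p : I × I => (p.1 : ℝ) := by fun_prop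
  have c2 : Continuous fun p : I × I => (p.2 : ℝ) := by fun_prop
  fin_cases i <;> simp only [RegA] <;>
    first
    | exact IsClosed.inter (isClosed_le c2 continuous_const)
        (IsClosed.inter (isClosed_le c1 c2) (isClosed_le c1 continuous_const))
    | exact IsClosed.inter (isClosed_le c2 continuous_const)
        (IsClosed.inter (isClosed_le c2 c1) (isClosed_le c1 (by fun_prop)))
    | exact IsClosed.inter (isClosed_le c2 continuous_const)
        (isClosed_le (by fun_prop) c1)
    | exact IsClosed.inter (isClosed_le continuous_const c1)
        (IsClosed.inter (isClosed_le c1 continuous_const)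
          (IsClosed.inter (isClosed_le continuous_const c2) (isClosed_le c2 continuous_const)))
    | exact IsClosed.inter (isClosed_le continuous_const c2)
        (IsClosed.inter (isClosed_le c2 continuous_const) (isClosed_le continuous_const c1))
    | exact IsClosed.inter (isClosed_le continuous_const c2)
        (isClosed_le c1 (by fun_prop))
    | exact IsClosed.inter (isClosed_le continuous_const c2)
        (IsClosed.inter (isClosed_le (by fun_prop) c1) (isClosed_le c1 c2))
    | exact IsClosed.inter (isClosed_le continuous_const c2)
        (isClosed_le c2 c1)

private lemma RegA_cover (z : I × I) : ∃ i, z ∈ RegA i := by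
  rcases le_or_gt (z.2 : ℝ) (1/4) with h1 | h1
  · rcases le_or_gt (z.1 : ℝ) (z.2 : ℝ) with h2 | h2
    · exact ⟨0, by simp only [RegA, Set.mem_setOf_eq]; exact ⟨by linarith, h2, by linarith⟩⟩
    · rcases le_or_gt (z.1 : ℝ) (1 - 2*(z.2 : ℝ)) with h3 | h3
      · exact ⟨1, by simp only [RegA, Set.mem_setOf_eq]; exact ⟨h1, le_of_lt h2, h3⟩⟩
      · exact ⟨2, by simp only [RegA, Set.mem_setOf_eq]; exact ⟨h1, le_of_lt h3⟩⟩
  · rcases le_or_gt (z.2 : ℝ) (3/4) with h2 | h2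
    · rcases le_or_gt (z.1 : ℝ) (1/4) with h3 | h3
      · exact ⟨0, by simp only [RegA, Set.mem_setOf_eq]; exact ⟨h2, by linarith, h3⟩⟩
      · rcases le_or_gt (z.1 : ℝ) (3/4) with h4 | h4
        · exact ⟨3, by simp only [RegA, Set.mem_setOf_eq]; exact ⟨le_of_lt h3, h4, by linarith, h2⟩⟩
        · exact ⟨4, by simp only [RegA, Set.mem_setOf_eq]; exact ⟨by linarith, h2, le_of_lt h4⟩⟩
    · rcases le_or_gt (z.1 : ℝ) (2*(1 - (z.2 : ℝ))) with h3 | h3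
      · exact ⟨5, by simp only [RegA, Set.mem_setOf_eq]; exact ⟨le_of_lt h2, h3⟩⟩
      · rcases le_or_gt (z.1 : ℝ) (z.2 : ℝ) with h4 | h4
        · exact ⟨6, by simp only [RegA, Set.mem_setOf_eq]; exact ⟨le_of_lt h2, le_of_lt h3, h4⟩⟩
        · exact ⟨7, by simp only [RegA, Set.mem_setOf_eq]; exact ⟨le_of_lt h2, le_of_lt h4⟩⟩

/-- The eight local pieces of the self-homotopy. -/
private def regF (g s : Path x₀ x₀) (F : (s.trans g).Homotopy (g.trans s)) :
    Fin 8 → I × I → X :=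
  (fun i => match i with
        | 0 => fun p => s (c01 (min ((p.2 : ℝ) - (p.1 : ℝ)) ((p.2 : ℝ) - 4*(p.2 : ℝ)*(p.1 : ℝ))))
        | 1 => fun p => g (c01 (((p.1 : ℝ) - (p.2 : ℝ)) / max (1 - 3*(p.2 : ℝ)) (1/4)))
        | 2 => fun p => s (c01 (min (4*(p.1 : ℝ) - 4 + 8*(p.2 : ℝ)) ((p.2 : ℝ) + 3 - 3*(p.1 : ℝ))))
        | 3 => fun p => F (c01 (3/2 - 2*(p.2 : ℝ)), c01 (2*(p.1 : ℝ) - 1/2))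
        | 4 => fun p => s (c01 (1 - 4*(1 - (p.2 : ℝ))*((p.1 : ℝ) - 3/4)))
        | 5 => fun p => s (c01 (max ((p.2 : ℝ) - 3*(p.1 : ℝ)) (4*(p.1 : ℝ) + 8*(p.2 : ℝ) - 7)))
        | 6 => fun p => g (c01 (((p.1 : ℝ) - 2 + 2*(p.2 : ℝ)) / max (3*(p.2 : ℝ) - 2) (1/4)))
        | 7 => fun p => s (c01 (1 - (p.1 : ℝ) + (p.2 : ℝ))))

private lemma regF_cont (g s : Path x₀ x₀) (F : (s.trans g).Homotopy (g.trans s))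
    (i : Fin 8) : Continuous (regF g s F i) := by
  fin_cases i <;> simp only [regF]
  · exact s.continuous.comp (continuous_c01.comp (by fun_prop))
  · exact g.continuous.comp (continuous_c01.comp
      ((Continuous.div (by fun_prop) (by fun_prop)
        (fun p => ne_of_gt (lt_of_lt_of_le (by norm_num) (le_max_right _ _))))))
  · exact s.continuous.comp (continuous_c01.comp (by fun_prop))
  · exact F.continuous.comp (Continuous.prodMk
      (continuous_c01.comp (by fun_prop)) (continuous_c01.comp (by fun_prop)))
  · exact s.continuous.comp (continuous_c01.comp (by fun_prop))
  · exact s.continuous.comp (continuous_c01.comp (by fun_prop))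
  · exact g.continuous.comp (continuous_c01.comp
      ((Continuous.div (by fun_prop) (by fun_prop)
        (fun p => ne_of_gt (lt_of_lt_of_le (by norm_num) (le_max_right _ _))))))
  · exact s.continuous.comp (continuous_c01.comp (by fun_prop))

set_option maxHeartbeats 2000000 in
private lemma regF_agree (g s : Path x₀ x₀) (F : (s.trans g).Homotopy (g.trans s))
    (i j : Fin 8) (z : I × I) (hi : z ∈ RegA i) (hj : z ∈ RegA j) :
    regF g s F i z = regF g s F j z := by
  have ht0 : (0:ℝ) ≤ (z.1 : ℝ) := z.1.2.1
  have ht1 : (z.1 : ℝ) ≤ 1 := z.1.2.2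
  have hu0 : (0:ℝ) ≤ (z.2 : ℝ) := z.2.2.1
  have hu1 : (z.2 : ℝ) ≤ 1 := z.2.2.2
  fin_cases i <;> fin_cases j <;> simp only [RegA, regF, Set.mem_setOf_eq] at hi hj ⊢
  · have e : (z.1 : ℝ) = (z.2 : ℝ) := le_antisymm hi.2.1 hj.2.1
    rw [show c01 (min ((z.2 : ℝ) - (z.1 : ℝ)) ((z.2 : ℝ) - 4*(z.2 : ℝ)*(z.1 : ℝ))) = 0 from c01_of_nonpos (le_trans (min_le_left _ _) (by linarith)),
      Path.source, show ((z.1 : ℝ) - (z.2 : ℝ)) = (0:ℝ) from by linarith, zero_div, c01_of_nonpos le_rfl,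
      Path.source]
  · exfalso; linarith [hi.1, hi.2.1, hi.2.2, hj.1, hj.2]
  · have e : (z.1 : ℝ) = 1/4 := le_antisymm hi.2.2 hj.1
    rw [show c01 (min ((z.2 : ℝ) - (z.1 : ℝ)) ((z.2 : ℝ) - 4*(z.2 : ℝ)*(z.1 : ℝ))) = 0 from
        c01_of_nonpos (le_trans (min_le_right _ _) (le_of_eq (by rw [e]; ring))),
      Path.source, show c01 (2*(z.1 : ℝ) - 1/2) = 0 from c01_of_nonpos (by linarith), F.source]
  · exfalso; linarith [hi.1, hi.2.1, hi.2.2, hj.1, hj.2.1, hj.2.2]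
  · have e : (z.2 : ℝ) = 3/4 := le_antisymm hi.1 hj.1
    rw [show min ((z.2 : ℝ) - (z.1 : ℝ)) ((z.2 : ℝ) - 4*(z.2 : ℝ)*(z.1 : ℝ)) = (z.2 : ℝ) - 4*(z.2 : ℝ)*(z.1 : ℝ) from
        min_eq_right (by rw [e]; linarith [ht0]),
      show (z.2 : ℝ) - 4*(z.2 : ℝ)*(z.1 : ℝ) = (z.2 : ℝ) - 3*(z.1 : ℝ) from by rw [e]; ring,
      show max ((z.2 : ℝ) - 3*(z.1 : ℝ)) (4*(z.1 : ℝ) + 8*(z.2 : ℝ) - 7) = (z.2 : ℝ) - 3*(z.1 : ℝ) from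
        max_eq_left (by rw [e]; linarith [hi.2.2])]
  · exfalso; linarith [hi.1, hi.2.1, hi.2.2, hj.1, hj.2.1, hj.2.2]
  · exfalso; linarith [hi.1, hi.2.1, hi.2.2, hj.1, hj.2]
  · symm
    have e : (z.1 : ℝ) = (z.2 : ℝ) := le_antisymm hj.2.1 hi.2.1
    rw [show c01 (min ((z.2 : ℝ) - (z.1 : ℝ)) ((z.2 : ℝ) - 4*(z.2 : ℝ)*(z.1 : ℝ))) = 0 from c01_of_nonpos (le_trans (min_le_left _ _) (by linarith)),
      Path.source, show ((z.1 : ℝ) - (z.2 : ℝ)) = (0:ℝ) from by linarith, zero_div, c01_of_nonpos le_rfl,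
      Path.source]
  · have e : (z.1 : ℝ) = 1 - 2*(z.2 : ℝ) := le_antisymm hi.2.2 hj.2
    rw [show c01 (((z.1 : ℝ) - (z.2 : ℝ)) / max (1 - 3*(z.2 : ℝ)) (1/4)) = 1 from by
        rw [max_eq_left (by linarith [hj.1]), show (z.1 : ℝ) - (z.2 : ℝ) = 1 - 3*(z.2 : ℝ) from by linarith,
          div_self (ne_of_gt (by linarith [hj.1]))]
        exact c01_of_ge le_rfl,
      Path.target, show c01 (min (4*(z.1 : ℝ) - 4 + 8*(z.2 : ℝ)) ((z.2 : ℝ) + 3 - 3*(z.1 : ℝ))) = 0 from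
        c01_of_nonpos (le_trans (min_le_left _ _) (by linarith)),
      Path.source]
  · have e : (z.2 : ℝ) = 1/4 := le_antisymm hi.1 hj.2.2.1
    have hval : ((z.1 : ℝ) - (z.2 : ℝ)) / max (1 - 3*(z.2 : ℝ)) (1/4) = 4*(z.1 : ℝ) - 1 := by
      rw [e, max_eq_right (by norm_num), div_eq_iff (by norm_num)]; ring
    rw [hval, show c01 (3/2 - 2*(z.2 : ℝ)) = 1 from c01_of_ge (by linarith), F.apply_one]
    simp only [Path.coe_toContinuousMap]
    rw [trans_eval_left g s (2*(z.1 : ℝ) - 1/2) (by linarith [hj.1]) (by linarith [hi.2.2]),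
      show 2*(2*(z.1 : ℝ) - 1/2) = 4*(z.1 : ℝ) - 1 from by ring]
  · exfalso; linarith [hi.1, hi.2.1, hi.2.2, hj.1, hj.2.1, hj.2.2]
  · exfalso; linarith [hi.1, hi.2.1, hi.2.2, hj.1, hj.2]
  · exfalso; linarith [hi.1, hi.2.1, hi.2.2, hj.1, hj.2.1, hj.2.2]
  · exfalso; linarith [hi.1, hi.2.1, hi.2.2, hj.1, hj.2]
  · exfalso; linarith [hi.1, hi.2, hj.1, hj.2.1, hj.2.2]
  · symm
    have e : (z.1 : ℝ) = 1 - 2*(z.2 : ℝ) := le_antisymm hj.2.2 hi.2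
    rw [show c01 (((z.1 : ℝ) - (z.2 : ℝ)) / max (1 - 3*(z.2 : ℝ)) (1/4)) = 1 from by
        rw [max_eq_left (by linarith [hi.1]), show (z.1 : ℝ) - (z.2 : ℝ) = 1 - 3*(z.2 : ℝ) from by linarith,
          div_self (ne_of_gt (by linarith [hi.1]))]
        exact c01_of_ge le_rfl,
      Path.target, show c01 (min (4*(z.1 : ℝ) - 4 + 8*(z.2 : ℝ)) ((z.2 : ℝ) + 3 - 3*(z.1 : ℝ))) = 0 from
        c01_of_nonpos (le_trans (min_le_left _ _) (by linarith)),
      Path.source]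
  · have e : (z.2 : ℝ) = 1/4 := le_antisymm hi.1 hj.2.2.1
    have hmin : min (4*(z.1 : ℝ) - 4 + 8*(z.2 : ℝ)) ((z.2 : ℝ) + 3 - 3*(z.1 : ℝ)) = 4*(z.1 : ℝ) - 2 := by
      rw [min_eq_left (by linarith [hj.2.1, hi.2])]; linarith
    rw [hmin, show c01 (3/2 - 2*(z.2 : ℝ)) = 1 from c01_of_ge (by linarith), F.apply_one]
    simp only [Path.coe_toContinuousMap]
    rw [trans_eval_right g s (2*(z.1 : ℝ) - 1/2) (by linarith [hi.2]) (by linarith [hj.2.1]),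
      show 2*(2*(z.1 : ℝ) - 1/2) - 1 = 4*(z.1 : ℝ) - 2 from by ring]
  · have e : (z.2 : ℝ) = 1/4 := le_antisymm hi.1 hj.1
    rw [show min (4*(z.1 : ℝ) - 4 + 8*(z.2 : ℝ)) ((z.2 : ℝ) + 3 - 3*(z.1 : ℝ)) = (z.2 : ℝ) + 3 - 3*(z.1 : ℝ) from min_eq_right (by linarith [hj.2.2]),
      show (z.2 : ℝ) + 3 - 3*(z.1 : ℝ) = 1 - 4*(1 - (z.2 : ℝ))*((z.1 : ℝ) - 3/4) from by rw [e]; ring]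
  · exfalso; linarith [hi.1, hi.2, hj.1, hj.2]
  · exfalso; linarith [hi.1, hi.2, hj.1, hj.2.1, hj.2.2]
  · exfalso; linarith [hi.1, hi.2, hj.1, hj.2]
  · symm
    have e : (z.1 : ℝ) = 1/4 := le_antisymm hj.2.2 hi.1
    rw [show c01 (min ((z.2 : ℝ) - (z.1 : ℝ)) ((z.2 : ℝ) - 4*(z.2 : ℝ)*(z.1 : ℝ))) = 0 from
        c01_of_nonpos (le_trans (min_le_right _ _) (le_of_eq (by rw [e]; ring))),
      Path.source, show c01 (2*(z.1 : ℝ) - 1/2) = 0 from c01_of_nonpos (by linarith), F.source]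
  · symm
    have e : (z.2 : ℝ) = 1/4 := le_antisymm hj.1 hi.2.2.1
    have hval : ((z.1 : ℝ) - (z.2 : ℝ)) / max (1 - 3*(z.2 : ℝ)) (1/4) = 4*(z.1 : ℝ) - 1 := by
      rw [e, max_eq_right (by norm_num), div_eq_iff (by norm_num)]; ring
    rw [hval, show c01 (3/2 - 2*(z.2 : ℝ)) = 1 from c01_of_ge (by linarith), F.apply_one]
    simp only [Path.coe_toContinuousMap]
    rw [trans_eval_left g s (2*(z.1 : ℝ) - 1/2) (by linarith [hi.1]) (by linarith [hj.2.2]),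
      show 2*(2*(z.1 : ℝ) - 1/2) = 4*(z.1 : ℝ) - 1 from by ring]
  · symm
    have e : (z.2 : ℝ) = 1/4 := le_antisymm hj.1 hi.2.2.1
    have hmin : min (4*(z.1 : ℝ) - 4 + 8*(z.2 : ℝ)) ((z.2 : ℝ) + 3 - 3*(z.1 : ℝ)) = 4*(z.1 : ℝ) - 2 := by
      rw [min_eq_left (by linarith [hi.2.1, hj.2])]; linarith
    rw [hmin, show c01 (3/2 - 2*(z.2 : ℝ)) = 1 from c01_of_ge (by linarith), F.apply_one]
    simp only [Path.coe_toContinuousMap]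
    rw [trans_eval_right g s (2*(z.1 : ℝ) - 1/2) (by linarith [hj.2]) (by linarith [hi.2.1]),
      show 2*(2*(z.1 : ℝ) - 1/2) - 1 = 4*(z.1 : ℝ) - 2 from by ring]
  · have et : (z.1 : ℝ) = 3/4 := le_antisymm hi.2.1 hj.2.2
    rw [show c01 (2*(z.1 : ℝ) - 1/2) = 1 from c01_of_ge (by linarith), F.target,
      show (1 - 4*(1 - (z.2 : ℝ))*((z.1 : ℝ) - 3/4)) = (1:ℝ) from by rw [et]; ring, c01_of_ge le_rfl, Path.target]
  · have e : (z.2 : ℝ) = 3/4 := le_antisymm hi.2.2.2 hj.1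
    have h2 : (z.1 : ℝ) ≤ 1/2 := by linarith [hj.2]
    rw [show c01 (3/2 - 2*(z.2 : ℝ)) = 0 from c01_of_nonpos (by linarith), F.apply_zero]
    simp only [Path.coe_toContinuousMap]
    rw [trans_eval_left s g (2*(z.1 : ℝ) - 1/2) (by linarith [hi.1]) (by linarith),
      show 2*(2*(z.1 : ℝ) - 1/2) = 4*(z.1 : ℝ) - 1 from by ring,
      show max ((z.2 : ℝ) - 3*(z.1 : ℝ)) (4*(z.1 : ℝ) + 8*(z.2 : ℝ) - 7) = 4*(z.1 : ℝ) + 8*(z.2 : ℝ) - 7 from max_eq_right (by linarith [hi.1]),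
      show 4*(z.1 : ℝ) + 8*(z.2 : ℝ) - 7 = 4*(z.1 : ℝ) - 1 from by rw [e]; ring]
  · have e : (z.2 : ℝ) = 3/4 := le_antisymm hi.2.2.2 hj.1
    have h2 : (1:ℝ)/2 ≤ (z.1 : ℝ) := by linarith [hj.2.1]
    have hval : ((z.1 : ℝ) - 2 + 2*(z.2 : ℝ)) / max (3*(z.2 : ℝ) - 2) (1/4) = 4*(z.1 : ℝ) - 2 := by
      rw [e, max_eq_right (by norm_num), div_eq_iff (by norm_num)]; ring
    rw [show c01 (3/2 - 2*(z.2 : ℝ)) = 0 from c01_of_nonpos (by linarith), F.apply_zero]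
    simp only [Path.coe_toContinuousMap]
    rw [trans_eval_right s g (2*(z.1 : ℝ) - 1/2) (by linarith) (by linarith [hi.2.1]),
      show 2*(2*(z.1 : ℝ) - 1/2) - 1 = 4*(z.1 : ℝ) - 2 from by ring, hval]
  · have e : (z.2 : ℝ) = 3/4 := le_antisymm hi.2.2.2 hj.1
    have et : (z.1 : ℝ) = 3/4 := le_antisymm hi.2.1 (by linarith [hj.2])
    rw [show c01 (2*(z.1 : ℝ) - 1/2) = 1 from c01_of_ge (by linarith), F.target,
      show c01 (1 - (z.1 : ℝ) + (z.2 : ℝ)) = 1 from c01_of_ge (by linarith), Path.target]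
  · exfalso; linarith [hi.1, hi.2.1, hi.2.2, hj.1, hj.2.1, hj.2.2]
  · exfalso; linarith [hi.1, hi.2.1, hi.2.2, hj.1, hj.2.1, hj.2.2]
  · symm
    have e : (z.2 : ℝ) = 1/4 := le_antisymm hj.1 hi.1
    rw [show min (4*(z.1 : ℝ) - 4 + 8*(z.2 : ℝ)) ((z.2 : ℝ) + 3 - 3*(z.1 : ℝ)) = (z.2 : ℝ) + 3 - 3*(z.1 : ℝ) from min_eq_right (by linarith [hi.2.2]),
      show (z.2 : ℝ) + 3 - 3*(z.1 : ℝ) = 1 - 4*(1 - (z.2 : ℝ))*((z.1 : ℝ) - 3/4) from by rw [e]; ring]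
  · symm
    have et : (z.1 : ℝ) = 3/4 := le_antisymm hj.2.1 hi.2.2
    rw [show c01 (2*(z.1 : ℝ) - 1/2) = 1 from c01_of_ge (by linarith), F.target,
      show (1 - 4*(1 - (z.2 : ℝ))*((z.1 : ℝ) - 3/4)) = (1:ℝ) from by rw [et]; ring, c01_of_ge le_rfl, Path.target]
  · exfalso; linarith [hi.1, hi.2.1, hi.2.2, hj.1, hj.2]
  · have e : (z.2 : ℝ) = 3/4 := le_antisymm hi.2.1 hj.1
    have et : (z.1 : ℝ) = 3/4 := le_antisymm (by linarith [hj.2.2]) hi.2.2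
    have hval : ((z.1 : ℝ) - 2 + 2*(z.2 : ℝ)) / max (3*(z.2 : ℝ) - 2) (1/4) = 1 := by
      rw [e, et, max_eq_right (by norm_num)]; norm_num
    rw [show (1 - 4*(1 - (z.2 : ℝ))*((z.1 : ℝ) - 3/4)) = (1:ℝ) from by rw [et]; ring, hval, c01_of_ge le_rfl,
      Path.target, Path.target]
  · have e : (z.2 : ℝ) = 3/4 := le_antisymm hi.2.1 hj.1
    rw [show (1 - 4*(1 - (z.2 : ℝ))*((z.1 : ℝ) - 3/4)) = (1 - (z.1 : ℝ) + (z.2 : ℝ)) from by rw [e]; ring]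
  · symm
    have e : (z.2 : ℝ) = 3/4 := le_antisymm hj.1 hi.1
    rw [show min ((z.2 : ℝ) - (z.1 : ℝ)) ((z.2 : ℝ) - 4*(z.2 : ℝ)*(z.1 : ℝ)) = (z.2 : ℝ) - 4*(z.2 : ℝ)*(z.1 : ℝ) from
        min_eq_right (by rw [e]; linarith [ht0]),
      show (z.2 : ℝ) - 4*(z.2 : ℝ)*(z.1 : ℝ) = (z.2 : ℝ) - 3*(z.1 : ℝ) from by rw [e]; ring,
      show max ((z.2 : ℝ) - 3*(z.1 : ℝ)) (4*(z.1 : ℝ) + 8*(z.2 : ℝ) - 7) = (z.2 : ℝ) - 3*(z.1 : ℝ) from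
        max_eq_left (by rw [e]; linarith [hj.2.2])]
  · exfalso; linarith [hi.1, hi.2, hj.1, hj.2.1, hj.2.2]
  · exfalso; linarith [hi.1, hi.2, hj.1, hj.2]
  · symm
    have e : (z.2 : ℝ) = 3/4 := le_antisymm hj.2.2.2 hi.1
    have h2 : (z.1 : ℝ) ≤ 1/2 := by linarith [hi.2]
    rw [show c01 (3/2 - 2*(z.2 : ℝ)) = 0 from c01_of_nonpos (by linarith), F.apply_zero]
    simp only [Path.coe_toContinuousMap]
    rw [trans_eval_left s g (2*(z.1 : ℝ) - 1/2) (by linarith [hj.1]) (by linarith),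
      show 2*(2*(z.1 : ℝ) - 1/2) = 4*(z.1 : ℝ) - 1 from by ring,
      show max ((z.2 : ℝ) - 3*(z.1 : ℝ)) (4*(z.1 : ℝ) + 8*(z.2 : ℝ) - 7) = 4*(z.1 : ℝ) + 8*(z.2 : ℝ) - 7 from max_eq_right (by linarith [hj.1]),
      show 4*(z.1 : ℝ) + 8*(z.2 : ℝ) - 7 = 4*(z.1 : ℝ) - 1 from by rw [e]; ring]
  · exfalso; linarith [hi.1, hi.2, hj.1, hj.2.1, hj.2.2]
  · have e : (z.1 : ℝ) = 2*(1 - (z.2 : ℝ)) := le_antisymm hi.2 hj.2.1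
    rw [show c01 (max ((z.2 : ℝ) - 3*(z.1 : ℝ)) (4*(z.1 : ℝ) + 8*(z.2 : ℝ) - 7)) = 1 from
        c01_of_ge (le_trans (by linarith : (1:ℝ) ≤ 4*(z.1 : ℝ) + 8*(z.2 : ℝ) - 7) (le_max_right _ _)),
      Path.target, show ((z.1 : ℝ) - 2 + 2*(z.2 : ℝ)) = (0:ℝ) from by linarith, zero_div,
      c01_of_nonpos le_rfl, Path.source]
  · exfalso; linarith [hi.1, hi.2, hj.1, hj.2]
  · exfalso; linarith [hi.1, hi.2.1, hi.2.2, hj.1, hj.2.1, hj.2.2]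
  · exfalso; linarith [hi.1, hi.2.1, hi.2.2, hj.1, hj.2.1, hj.2.2]
  · exfalso; linarith [hi.1, hi.2.1, hi.2.2, hj.1, hj.2]
  · symm
    have e : (z.2 : ℝ) = 3/4 := le_antisymm hj.2.2.2 hi.1
    have h2 : (1:ℝ)/2 ≤ (z.1 : ℝ) := by linarith [hi.2.1]
    have hval : ((z.1 : ℝ) - 2 + 2*(z.2 : ℝ)) / max (3*(z.2 : ℝ) - 2) (1/4) = 4*(z.1 : ℝ) - 2 := by
      rw [e, max_eq_right (by norm_num), div_eq_iff (by norm_num)]; ring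
    rw [show c01 (3/2 - 2*(z.2 : ℝ)) = 0 from c01_of_nonpos (by linarith), F.apply_zero]
    simp only [Path.coe_toContinuousMap]
    rw [trans_eval_right s g (2*(z.1 : ℝ) - 1/2) (by linarith) (by linarith [hj.2.1]),
      show 2*(2*(z.1 : ℝ) - 1/2) - 1 = 4*(z.1 : ℝ) - 2 from by ring, hval]
  · symm
    have e : (z.2 : ℝ) = 3/4 := le_antisymm hj.2.1 hi.1
    have et : (z.1 : ℝ) = 3/4 := le_antisymm (by linarith [hi.2.2]) hj.2.2
    have hval : ((z.1 : ℝ) - 2 + 2*(z.2 : ℝ)) / max (3*(z.2 : ℝ) - 2) (1/4) = 1 := by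
      rw [e, et, max_eq_right (by norm_num)]; norm_num
    rw [show (1 - 4*(1 - (z.2 : ℝ))*((z.1 : ℝ) - 3/4)) = (1:ℝ) from by rw [et]; ring, hval, c01_of_ge le_rfl,
      Path.target, Path.target]
  · symm
    have e : (z.1 : ℝ) = 2*(1 - (z.2 : ℝ)) := le_antisymm hj.2 hi.2.1
    rw [show c01 (max ((z.2 : ℝ) - 3*(z.1 : ℝ)) (4*(z.1 : ℝ) + 8*(z.2 : ℝ) - 7)) = 1 from
        c01_of_ge (le_trans (by linarith : (1:ℝ) ≤ 4*(z.1 : ℝ) + 8*(z.2 : ℝ) - 7) (le_max_right _ _)),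
      Path.target, show ((z.1 : ℝ) - 2 + 2*(z.2 : ℝ)) = (0:ℝ) from by linarith, zero_div,
      c01_of_nonpos le_rfl, Path.source]
  · have e : (z.1 : ℝ) = (z.2 : ℝ) := le_antisymm hi.2.2 hj.2
    rw [show ((z.1 : ℝ) - 2 + 2*(z.2 : ℝ)) = 3*(z.2 : ℝ) - 2 from by linarith,
      max_eq_left (by linarith [hi.1]), div_self (ne_of_gt (by linarith [hi.1])),
      c01_of_ge le_rfl, Path.target, show c01 (1 - (z.1 : ℝ) + (z.2 : ℝ)) = 1 from c01_of_ge (by linarith),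
      Path.target]
  · exfalso; linarith [hi.1, hi.2, hj.1, hj.2.1, hj.2.2]
  · exfalso; linarith [hi.1, hi.2, hj.1, hj.2.1, hj.2.2]
  · exfalso; linarith [hi.1, hi.2, hj.1, hj.2]
  · symm
    have e : (z.2 : ℝ) = 3/4 := le_antisymm hj.2.2.2 hi.1
    have et : (z.1 : ℝ) = 3/4 := le_antisymm hj.2.1 (by linarith [hi.2])
    rw [show c01 (2*(z.1 : ℝ) - 1/2) = 1 from c01_of_ge (by linarith), F.target,
      show c01 (1 - (z.1 : ℝ) + (z.2 : ℝ)) = 1 from c01_of_ge (by linarith), Path.target]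
  · symm
    have e : (z.2 : ℝ) = 3/4 := le_antisymm hj.2.1 hi.1
    rw [show (1 - 4*(1 - (z.2 : ℝ))*((z.1 : ℝ) - 3/4)) = (1 - (z.1 : ℝ) + (z.2 : ℝ)) from by rw [e]; ring]
  · exfalso; linarith [hi.1, hi.2, hj.1, hj.2]
  · symm
    have e : (z.1 : ℝ) = (z.2 : ℝ) := le_antisymm hj.2.2 hi.2
    rw [show ((z.1 : ℝ) - 2 + 2*(z.2 : ℝ)) = 3*(z.2 : ℝ) - 2 from by linarith,
      max_eq_left (by linarith [hj.1]), div_self (ne_of_gt (by linarith [hj.1])),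
      c01_of_ge le_rfl, Path.target, show c01 (1 - (z.1 : ℝ) + (z.2 : ℝ)) = 1 from c01_of_ge (by linarith),
      Path.target]

end SelfHomotopyAux

/-- For loops `g`, `s` at `x₀` in a topological space `X`, there exists a
free self-homotopy of `g` whose basepoint traces out `s` (a continuous
`H : I × I → X` with `H(t,0) = H(t,1) = g(t)` and `H(0,u) = H(1,u) = s(u)`) if and
only if `s·g` is path-homotopic (rel endpoints) to `g·s`, i.e. the classes of `s`
and `g` commute in `π₁(X, x₀)`. -/
theorem self_homotopy_of_loop_exists_iff_commute
    {X : Type*} [TopologicalSpace X] {x₀ : X} (g s : Path x₀ x₀) :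
    (∃ H : I × I → X, Continuous H ∧
      (∀ t : I, H (t, 0) = g t) ∧
      (∀ t : I, H (t, 1) = g t) ∧
      (∀ u : I, H (0, u) = s u) ∧
      (∀ u : I, H (1, u) = s u)) ↔
    (s.trans g).Homotopic (g.trans s) := by
  constructor
  · rintro ⟨H, Hc, h0, h1, hl, hr⟩
    refine ⟨{
      toFun := fun p => H (c01 ((1 - (p.1:ℝ)) * cl (2*(p.2:ℝ) - 1) + (p.1:ℝ) * cl (2*(p.2:ℝ))),
                           c01 ((1 - (p.1:ℝ)) * cl (2*(p.2:ℝ)) + (p.1:ℝ) * cl (2*(p.2:ℝ) - 1)))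
      continuous_toFun := ?_
      map_zero_left := ?_
      map_one_left := ?_
      prop' := ?_ }⟩
    · apply Hc.comp
      apply Continuous.prodMk <;> · apply continuous_c01.comp; fun_prop [cl]
    · intro x
      have hx0 : (0:ℝ) ≤ (x:ℝ) := x.2.1
      have hx1 : (x:ℝ) ≤ 1 := x.2.2
      simp only [Set.Icc.coe_zero, sub_zero, one_mul, zero_mul, add_zero, zero_add,
        Path.coe_toContinuousMap, c01_cl]
      rw [Path.trans_apply]
      rcases le_or_gt (x:ℝ) (1/2) with h | h
      · rw [dif_pos h, show c01 (2*(x:ℝ)-1) = 0 from c01_of_nonpos (by linarith), hl]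
        exact congr_arg s (Subtype.ext (cl_of_mem (by linarith) (by linarith)))
      · rw [dif_neg (not_le.mpr h), show c01 (2*(x:ℝ)) = 1 from c01_of_ge (by linarith), h1]
        exact congr_arg g (Subtype.ext (cl_of_mem (by linarith) (by linarith)))
    · intro x
      have hx0 : (0:ℝ) ≤ (x:ℝ) := x.2.1
      have hx1 : (x:ℝ) ≤ 1 := x.2.2
      simp only [Set.Icc.coe_one, sub_self, zero_mul, one_mul, add_zero, zero_add,
        Path.coe_toContinuousMap, c01_cl]
      rw [Path.trans_apply]
      rcases le_or_gt (x:ℝ) (1/2) with h | h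
      · rw [dif_pos h, show c01 (2*(x:ℝ)-1) = 0 from c01_of_nonpos (by linarith), h0]
        exact congr_arg g (Subtype.ext (cl_of_mem (by linarith) (by linarith)))
      · rw [dif_neg (not_le.mpr h), show c01 (2*(x:ℝ)) = 1 from c01_of_ge (by linarith), hr]
        exact congr_arg s (Subtype.ext (cl_of_mem (by linarith) (by linarith)))
    · intro v x hx
      simp only [Path.coe_toContinuousMap, ContinuousMap.coe_mk]
      rcases hx with hx | hx
      · subst hx
        have Z1 : cl (2*(((0:I)):ℝ) - 1) = 0 := cl_of_nonpos (by norm_num)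
        have Z2 : cl (2*(((0:I)):ℝ)) = 0 := by
          rw [Set.Icc.coe_zero, mul_zero]; exact cl_of_nonpos le_rfl
        rw [Z1, Z2]
        simp only [mul_zero, add_zero, zero_add]
        rw [c01_of_nonpos le_rfl, hl, Path.source, Path.source]
      · subst hx
        have Z1 : cl (2*(((1:I)):ℝ) - 1) = 1 := by
          rw [Set.Icc.coe_one]; norm_num [cl]
        have Z2 : cl (2*(((1:I)):ℝ)) = 1 := by
          rw [Set.Icc.coe_one]; exact cl_of_ge (by norm_num)
        rw [Z1, Z2]
        simp only [mul_one, sub_add_cancel]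
        rw [c01_of_ge le_rfl, hr, Path.target, Path.target]
  · rintro ⟨F⟩
    obtain ⟨h, hc, hh⟩ := glue_cover RegA (regF g s F) RegA_cover RegA_closed
      (regF_cont g s F) (regF_agree g s F)
    refine ⟨h, hc, ?_, ?_, ?_, ?_⟩
    · intro τ
      rw [hh 1 (τ, 0) (by
        simp only [RegA, Set.mem_setOf_eq, Set.Icc.coe_zero]
        exact ⟨by norm_num, τ.2.1, by linarith [τ.2.2]⟩)]
      simp only [regF]
      rw [show ((τ:ℝ) - (((0:I)):ℝ)) / max (1 - 3*(((0:I)):ℝ)) (1/4) = (τ:ℝ) from by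
            rw [Set.Icc.coe_zero, max_eq_left (by norm_num)]; ring,
          c01_id]
    · intro τ
      rw [hh 6 (τ, 1) (by
        simp only [RegA, Set.mem_setOf_eq, Set.Icc.coe_one]
        exact ⟨by norm_num, by linarith [τ.2.1], τ.2.2⟩)]
      simp only [regF]
      rw [show ((τ:ℝ) - 2 + 2*(((1:I)):ℝ)) / max (3*(((1:I)):ℝ) - 2) (1/4) = (τ:ℝ) from by
            rw [Set.Icc.coe_one, max_eq_left (by norm_num)]; ring,
          c01_id]
    · intro u
      rcases le_or_gt (u : ℝ) (3/4) with h | h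
      · rw [hh 0 ((0 : I), u) (by
          simp only [RegA, Set.mem_setOf_eq, Set.Icc.coe_zero]
          exact ⟨h, u.2.1, by norm_num⟩)]
        simp only [regF]
        rw [show min ((u:ℝ) - (((0:I)):ℝ)) ((u:ℝ) - 4*(u:ℝ)*(((0:I)):ℝ)) = (u:ℝ) from by
              rw [Set.Icc.coe_zero, mul_zero, sub_zero, min_self],
            c01_id]
      · rw [hh 5 ((0 : I), u) (by
          simp only [RegA, Set.mem_setOf_eq, Set.Icc.coe_zero]
          exact ⟨le_of_lt h, by linarith [u.2.2]⟩)]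
        simp only [regF]
        rw [show max ((u:ℝ) - 3*(((0:I)):ℝ)) (4*(((0:I)):ℝ) + 8*(u:ℝ) - 7) = (u:ℝ) from by
              rw [Set.Icc.coe_zero, mul_zero, sub_zero, mul_zero, zero_add]
              exact max_eq_left (by linarith [u.2.2]),
            c01_id]
    · intro u
      rcases le_or_gt (u : ℝ) (1/4) with h | h
      · rw [hh 2 ((1 : I), u) (by
          simp only [RegA, Set.mem_setOf_eq, Set.Icc.coe_one]
          exact ⟨h, by linarith [u.2.1]⟩)]
        simp only [regF]
        rw [show min (4*(((1:I)):ℝ) - 4 + 8*(u:ℝ)) ((u:ℝ) + 3 - 3*(((1:I)):ℝ)) = (u:ℝ) from by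
              rw [Set.Icc.coe_one, min_eq_right (by linarith [u.2.1])]; ring,
            c01_id]
      · rcases le_or_gt (u : ℝ) (3/4) with h2 | h2
        · rw [hh 4 ((1 : I), u) (by
            simp only [RegA, Set.mem_setOf_eq, Set.Icc.coe_one]
            exact ⟨le_of_lt h, h2, by norm_num⟩)]
          simp only [regF]
          rw [show 1 - 4*(1 - (u:ℝ))*((((1:I)):ℝ) - 3/4) = (u:ℝ) from by
                rw [Set.Icc.coe_one]; ring,
              c01_id]
        · rw [hh 7 ((1 : I), u) (by
            simp only [RegA, Set.mem_setOf_eq, Set.Icc.coe_one]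
            exact ⟨le_of_lt h2, u.2.2⟩)]
          simp only [regF]
          rw [show 1 - (((1:I)):ℝ) + (u:ℝ) = (u:ℝ) from by rw [Set.Icc.coe_one]; ring,
              c01_id]
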